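/- For all natural numbers n and δ with δ < 2n/3, there exists a connected edge-coloured graph G on n vertices with δ^c(G) = δ such that every collection of vertex-disjoint properly coloured cycles in G spans at most 3δ/2 vertices; in particular G contains no properly coloured 2-factor and no properly coloured Hamiltonian cycle. -/

import Mathlib

open SimpleGraph

/-- A list of vertices forms a properly coloured walk: consecutive vertices are
adjacent and consecutive edges receive different colours. -/
def IsPCWalk {V : Type*} (G : SimpleGraph V) (c : V → V → ℕ) : List V → Prop
  | a :: b :: d :: rest => G.Adj a b ∧ c a b ≠ c b d ∧ IsPCWalk G c (b :: d :: rest)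
  | [a, b] => G.Adj a b
  | _ => True

/-- A properly coloured path: distinct vertices forming a properly coloured walk. -/
def IsPCPath {V : Type*} (G : SimpleGraph V) (c : V → V → ℕ) (l : List V) : Prop :=
  l.Nodup ∧ IsPCWalk G c l

/-- A properly coloured cycle, given as a list of (distinct) vertices of length ≥ 3;
closing the cycle by appending the first two vertices ensures all adjacencies and
colour conditions, including around the wrap-around vertex. -/
def IsPCCycle {V : Type*} (G : SimpleGraph V) (c : V → V → ℕ) (l : List V) : Prop :=
  3 ≤ l.length ∧ l.Nodup ∧ IsPCWalk G c (l ++ l.take 2)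

/-- The colour degree of `v`: the number of distinct colours on edges at `v`. -/
noncomputable def colourDeg {V : Type*} (G : SimpleGraph V) (c : V → V → ℕ) (v : V) : ℕ :=
  ((c v) '' {w | G.Adj v w}).ncard

/-- `colourDeg1 G c v a`: the number of edges at `v` whose colour differs from `a`.
`δ₁^c(G) ≥ k` is then `∀ v a, k ≤ colourDeg1 G c v a`. -/
noncomputable def colourDeg1 {V : Type*} (G : SimpleGraph V) (c : V → V → ℕ) (v : V) (a : ℕ) : ℕ :=
  {w | G.Adj v w ∧ c v w ≠ a}.ncard

/-- For all `n, δ ≥ 1` with `δ < 2n/3` there is a connected edge-coloured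
graph on `n` vertices with minimum colour degree exactly `δ` in which every collection of
vertex-disjoint properly coloured cycles spans at most `3δ/2` vertices; in particular it has
no properly coloured 2-factor and no properly coloured Hamiltonian cycle. -/
theorem pcwalk_adj {V : Type*} {G : SimpleGraph V} {c : V → V → ℕ} :
    ∀ (m : List V), IsPCWalk G c m → ∀ j, (h : j + 1 < m.length) →
      G.Adj (m[j]'(by omega)) (m[j+1]'h)
  | [], _, j, h => by exfalso; simp at h
  | [a], _, j, h => by exfalso; simp at h
  | [a, b], hw, 0, h => hw
  | [a, b], hw, (j+1), h => by exfalso; simp at h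
  | (a :: b :: d :: rest), hw, 0, h => hw.1
  | (a :: b :: d :: rest), hw, (j+1), h => by
      have := pcwalk_adj (b :: d :: rest) hw.2.2 j (by simpa using h)
      simpa using this

theorem pcwalk_col {V : Type*} {G : SimpleGraph V} {c : V → V → ℕ} :
    ∀ (m : List V), IsPCWalk G c m → ∀ j, (h : j + 2 < m.length) →
      c (m[j]'(by omega)) (m[j+1]'(by omega)) ≠ c (m[j+1]'(by omega)) (m[j+2]'h)
  | [], _, j, h => by exfalso; simp at h
  | [a], _, j, h => by exfalso; simp at h
  | [a, b], hw, j, h => by exfalso; simp at h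
  | (a :: b :: d :: rest), hw, 0, h => hw.2.1
  | (a :: b :: d :: rest), hw, (j+1), h => by
      have := pcwalk_col (b :: d :: rest) hw.2.2 j (by simpa using h)
      simpa using this

lemma wrap_len {α : Type*} (l : List α) (hl : 2 ≤ l.length) :
    (l ++ l.take 2).length = l.length + 2 := by
  simp [List.length_take]; omega

lemma wrap_get {α : Type*} (l : List α) (hl : 2 ≤ l.length) (k : ℕ) (hk : k < l.length + 2) :
    (l ++ l.take 2)[k]'(by rw [wrap_len l hl]; omega) =
      l[k % l.length]'(Nat.mod_lt _ (by omega)) := by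
  rcases lt_or_ge k l.length with hkl | hkl
  · rw [List.getElem_append_left hkl]
    congr 1
    exact (Nat.mod_eq_of_lt hkl).symm
  · rcases (by omega : k = l.length ∨ k = l.length + 1) with rfl | rfl
    · rw [List.getElem_append_right (le_refl _)]
      simp [List.getElem_take, Nat.mod_self]
    · rw [List.getElem_append_right (by omega)]
      have : (l.length + 1) % l.length = 1 := by
        rw [Nat.add_mod_left]; exact Nat.mod_eq_of_lt (by omega)
      simp [List.getElem_take, this]

def Gr (n δ : ℕ) : SimpleGraph (Fin n) where
  Adj u v := u ≠ v ∧ (u.val < δ ∨ v.val < δ)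
  symm := by constructor; intro u v hv; exact ⟨hv.1.symm, hv.2.symm⟩
  loopless := by constructor; intro v hv; exact hv.1 rfl

def col {n : ℕ} (δ : ℕ) (u v : Fin n) : ℕ :=
  if u.val < δ ∧ v.val < δ then u.val + v.val else 2 * δ + min u.val v.val + 1

lemma col_symm {n : ℕ} (δ : ℕ) (u v : Fin n) : col δ u v = col δ v u := by
  simp [col, and_comm, Nat.add_comm u.val, Nat.min_comm u.val]

lemma col_AB {n δ : ℕ} {u v : Fin n} (hu : u.val < δ) (hv : δ ≤ v.val) :
    col δ u v = 2 * δ + u.val + 1 := by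
  rw [col, if_neg (by omega), Nat.min_eq_left (by omega)]

lemma col_BA {n δ : ℕ} {u v : Fin n} (hu : δ ≤ u.val) (hv : v.val < δ) :
    col δ u v = 2 * δ + v.val + 1 := by
  rw [col_symm]; exact col_AB hv hu

lemma col_AA {n δ : ℕ} {u v : Fin n} (hu : u.val < δ) (hv : v.val < δ) :
    col δ u v = u.val + v.val := by
  rw [col, if_pos ⟨hu, hv⟩]
section CycleBound
variable {n δ : ℕ} {l : List (Fin n)}

lemma cycle_bound (hl : IsPCCycle (Gr n δ) (col δ) l) :
    2 * l.length ≤ 3 * (l.filter (fun x => x.val < δ)).length := by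
  obtain ⟨hL3, hnd, hw⟩ := hl
  set L := l.length with hLdef
  haveI : NeZero L := ⟨by omega⟩
  set v : ZMod L → Fin n := fun i => l[i.val]'(ZMod.val_lt i) with hv
  -- val of shifts
  have valshift : ∀ (i : ZMod L) (k : ℕ), (i + (k : ZMod L)).val = (i.val + k) % L := by
    intro i k
    rw [ZMod.val_add, ZMod.val_natCast, Nat.add_mod_mod]
  -- walk facts
  have hadj : ∀ i : ZMod L, (Gr n δ).Adj (v i) (v (i + 1)) := by
    intro i
    have h1 := pcwalk_adj _ hw i.val (by rw [wrap_len l (by omega)]; have := ZMod.val_lt i; omega)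
    rw [wrap_get l (by omega) i.val (by have := ZMod.val_lt i; omega),
        wrap_get l (by omega) (i.val+1) (by have := ZMod.val_lt i; omega)] at h1
    have e1 : (i + 1).val = (i.val + 1) % L := by
      rw [← Nat.cast_one (R := ZMod L), valshift]
    simp only [hv, e1]
    convert h1 using 2
    exact (Nat.mod_eq_of_lt (ZMod.val_lt i)).symm
  have hF1 : ∀ i : ZMod L, δ ≤ (v i).val → (v (i + 1)).val < δ := by
    intro i hi
    rcases (hadj i).2 with h | h
    · omega
    · exact h
  have hF2 : ∀ i : ZMod L, δ ≤ (v i).val → (v (i + 2)).val < δ := by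
    intro i hi
    by_contra hcon
    push_neg at hcon
    have hmid := hF1 i hi
    have h1 := pcwalk_col _ hw i.val (by rw [wrap_len l (by omega)]; have := ZMod.val_lt i; omega)
    rw [wrap_get l (by omega) i.val (by have := ZMod.val_lt i; omega),
        wrap_get l (by omega) (i.val+1) (by have := ZMod.val_lt i; omega),
        wrap_get l (by omega) (i.val+2) (by have := ZMod.val_lt i; omega)] at h1
    have e0 : i.val % L = i.val := Nat.mod_eq_of_lt (ZMod.val_lt i)
    have e1 : (i + 1).val = (i.val + 1) % L := by
      rw [← Nat.cast_one (R := ZMod L), valshift]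
    have e2 : (i + 2).val = (i.val + 2) % L := by
      rw [show (2 : ZMod L) = ((2:ℕ) : ZMod L) by push_cast; ring, valshift]
    apply h1
    have hv0 : l[i.val % L]'(Nat.mod_lt _ (by omega)) = v i := by
      simp only [hv]; congr 1
    have hv1 : l[(i.val+1) % L]'(Nat.mod_lt _ (by omega)) = v (i+1) := by
      simp only [hv, e1]
    have hv2 : l[(i.val+2) % L]'(Nat.mod_lt _ (by omega)) = v (i+2) := by
      simp only [hv, e2]
    rw [hv0, hv1, hv2, col_BA hi hmid, col_AB hmid hcon]
  -- counting
  classical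
  set SB : Finset (ZMod L) := Finset.univ.filter (fun i => δ ≤ (v i).val) with hSB
  set SA : Finset (ZMod L) := Finset.univ.filter (fun i => (v i).val < δ) with hSA
  have memSB : ∀ i : ZMod L, i ∈ SB ↔ δ ≤ (v i).val := by
    intro i; simp [hSB]
  have hcards : SA.card + SB.card = L := by
    have := Finset.card_filter_add_card_filter_not
      (s := (Finset.univ : Finset (ZMod L))) (p := fun i => (v i).val < δ)
    rw [← hSA] at this
    have heq : Finset.univ.filter (fun i : ZMod L => ¬ (v i).val < δ) = SB := by
      apply Finset.filter_congr; intro i _; simp [Nat.not_lt]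
    rw [heq, Finset.card_univ, ZMod.card] at this
    exact this
  set S1 := SB.image (· + (1 : ZMod L)) with hS1
  set S2 := SB.image (· + (2 : ZMod L)) with hS2
  have hinj1 : Function.Injective (· + (1 : ZMod L)) := add_left_injective 1
  have hinj2 : Function.Injective (· + (2 : ZMod L)) := add_left_injective 2
  have hd01 : Disjoint SB S1 := by
    rw [Finset.disjoint_left]
    intro x hx hx1
    obtain ⟨j, hj, rfl⟩ := Finset.mem_image.mp hx1
    exact absurd ((memSB _).mp hx) (by exact Nat.not_le.mpr (hF1 j ((memSB _).mp hj)))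
  have hd02 : Disjoint SB S2 := by
    rw [Finset.disjoint_left]
    intro x hx hx2
    obtain ⟨j, hj, rfl⟩ := Finset.mem_image.mp hx2
    exact absurd ((memSB _).mp hx) (Nat.not_le.mpr (hF2 j ((memSB _).mp hj)))
  have hd12 : Disjoint S1 S2 := by
    rw [Finset.disjoint_left]
    intro x hx1 hx2
    obtain ⟨j, hj, rfl⟩ := Finset.mem_image.mp hx1
    obtain ⟨j', hj', he⟩ := Finset.mem_image.mp hx2
    have : j = j' + 1 := by
      have : j' + 1 + 1 = j + 1 := by rw [← he]; ring
      exact (add_left_injective 1 this).symm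
    subst this
    exact absurd ((memSB _).mp hj) (Nat.not_le.mpr (hF1 j' ((memSB _).mp hj')))
  have hcard3 : 3 * SB.card ≤ L := by
    have h1 : (SB ∪ S1 ∪ S2).card = 3 * SB.card := by
      rw [Finset.card_union_of_disjoint (by
        exact Finset.disjoint_union_left.mpr ⟨hd02, hd12⟩),
        Finset.card_union_of_disjoint hd01,
        Finset.card_image_of_injective _ hinj1, Finset.card_image_of_injective _ hinj2]
      ring
    calc 3 * SB.card = (SB ∪ S1 ∪ S2).card := h1.symm
      _ ≤ Finset.univ.card := Finset.card_le_card (Finset.subset_univ _)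
      _ = L := by rw [Finset.card_univ, ZMod.card]
  -- SA card = filter length
  have hvinj : Function.Injective v := by
    intro i j hij
    have := List.Nodup.getElem_inj_iff hnd |>.mp hij
    exact ZMod.val_injective _ this
  have himg : SA.image v = (l.filter (fun x => x.val < δ)).toFinset := by
    ext x
    simp only [Finset.mem_image, List.mem_toFinset, List.mem_filter, decide_eq_true_eq, hSA,
      Finset.mem_filter, Finset.mem_univ, true_and]
    constructor
    · rintro ⟨i, hi, rfl⟩
      exact ⟨by rw [hv]; exact List.getElem_mem _, hi⟩
    · rintro ⟨hxl, hxδ⟩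
      obtain ⟨k, hk, rfl⟩ := List.mem_iff_getElem.mp hxl
      refine ⟨(k : ZMod L), ?_, ?_⟩
      · have : v (k : ZMod L) = l[k] := by
          simp only [hv]; congr 1
          rw [ZMod.val_natCast]; exact Nat.mod_eq_of_lt hk
        rw [this]; exact hxδ
      · simp only [hv]; congr 1
        rw [ZMod.val_natCast]; exact Nat.mod_eq_of_lt hk
  have hSAcard : SA.card = (l.filter (fun x => x.val < δ)).length := by
    rw [← Finset.card_image_of_injective SA hvinj, himg,
      List.toFinset_card_of_nodup (hnd.filter _)]
  omega

end CycleBound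

lemma colourDeg_eq {n δ : ℕ} (hδ : 1 ≤ δ) (hn : δ + 1 ≤ n) (v : Fin n) :
    colourDeg (Gr n δ) (col δ) v = δ := by
  classical
  rcases lt_or_ge v.val δ with hvA | hvB
  · -- v in A
    have himg : (col δ v) '' {w | (Gr n δ).Adj v w} =
        ↑((((Finset.range δ).erase v.val).image (fun w => v.val + w)) ∪ {2 * δ + v.val + 1}) := by
      ext x
      simp only [Set.mem_image, Set.mem_setOf_eq, Finset.coe_union, Finset.coe_image,
        Set.mem_union, Set.mem_image, Finset.mem_coe, Finset.mem_erase, Finset.mem_range,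
        Finset.coe_singleton, Set.mem_singleton_iff]
      constructor
      · rintro ⟨w, hw, rfl⟩
        rcases lt_or_ge w.val δ with hwA | hwB
        · left
          exact ⟨w.val, ⟨fun hc => hw.1 (Fin.val_injective hc).symm, hwA⟩, (col_AA hvA hwA).symm⟩
        · right
          exact col_AB hvA hwB
      · rintro (⟨w0, ⟨hne, hw0⟩, rfl⟩ | rfl)
        · have hwn : w0 < n := by omega
          have hval : ((⟨w0, hwn⟩ : Fin n)).val = w0 := rfl
          refine ⟨⟨w0, hwn⟩, ⟨?_, Or.inl hvA⟩, ?_⟩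
          · intro hc
            apply hne
            rw [hc, hval]
          · rw [col_AA hvA (by rw [hval]; exact hw0), hval]
        · refine ⟨⟨δ, by omega⟩, ⟨?_, Or.inl hvA⟩, col_AB hvA (le_refl _)⟩
          intro hc
          have : v.val = δ := by rw [hc]
          omega
    rw [colourDeg, himg, Set.ncard_coe_finset]
    rw [Finset.card_union_of_disjoint, Finset.card_image_of_injective _ (add_right_injective _),
      Finset.card_erase_of_mem (Finset.mem_range.mpr hvA), Finset.card_range, Finset.card_singleton]
    · omega
    · rw [Finset.disjoint_singleton_right]
      intro hc
      obtain ⟨w0, hw0, he⟩ := Finset.mem_image.mp hc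
      have := Finset.mem_range.mp (Finset.mem_erase.mp hw0).2
      omega
  · -- v in B
    have himg : (col δ v) '' {w | (Gr n δ).Adj v w} =
        ↑((Finset.range δ).image (fun w => 2 * δ + w + 1)) := by
      ext x
      simp only [Set.mem_image, Set.mem_setOf_eq, Finset.coe_image, Set.mem_image,
        Finset.mem_coe, Finset.mem_range]
      constructor
      · rintro ⟨w, hw, rfl⟩
        rcases hw.2 with h | h
        · omega
        · exact ⟨w.val, h, (col_BA hvB h).symm⟩
      · rintro ⟨w0, hw0, rfl⟩
        have hwn : w0 < n := by omega
        have hval : ((⟨w0, hwn⟩ : Fin n)).val = w0 := rfl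
        refine ⟨⟨w0, hwn⟩, ⟨?_, Or.inr (by rw [hval]; exact hw0)⟩, ?_⟩
        · intro hc
          have : v.val = w0 := by rw [hc, hval]
          omega
        · rw [col_BA hvB (by rw [hval]; exact hw0), hval]
    rw [colourDeg, himg, Set.ncard_coe_finset,
      Finset.card_image_of_injective _ (fun a b hab => by omega), Finset.card_range]

lemma Gr_connected {n δ : ℕ} (hδ : 1 ≤ δ) (hn : 1 ≤ n) : (Gr n δ).Connected := by
  have hz : (0 : ℕ) < n := hn
  set z : Fin n := ⟨0, hz⟩ with hzdef
  have key : ∀ u : Fin n, (Gr n δ).Reachable u z := by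
    intro u
    by_cases hu : u = z
    · rw [hu]
    · exact SimpleGraph.Adj.reachable ⟨hu, Or.inr (show (0:ℕ) < δ from hδ)⟩
  rw [SimpleGraph.connected_iff]
  refine ⟨fun u v => (key u).trans (key v).symm, ⟨z⟩⟩

lemma Afin_card {n δ : ℕ} (hn : δ ≤ n) :
    (Finset.univ.filter (fun x : Fin n => x.val < δ)).card = δ := by
  classical
  have himg : (Finset.univ.filter (fun x : Fin n => x.val < δ)).image Fin.val
      = Finset.range δ := by
    ext k
    simp only [Finset.mem_image, Finset.mem_filter, Finset.mem_univ, true_and, Finset.mem_range]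
    constructor
    · rintro ⟨x, hx, rfl⟩; exact hx
    · intro hk
      exact ⟨⟨k, by omega⟩, hk, rfl⟩
  have h2 := Finset.card_image_of_injective
    (Finset.univ.filter (fun x : Fin n => x.val < δ)) Fin.val_injective
  rw [himg, Finset.card_range] at h2
  exact h2.symm

lemma sum_bound {n δ : ℕ} (hn : δ ≤ n) (S : Finset (List (Fin n)))
    (hcyc : ∀ l ∈ S, IsPCCycle (Gr n δ) (col δ) l)
    (hdisj : ∀ l ∈ S, ∀ l' ∈ S, l ≠ l' → ∀ v, v ∈ l → v ∉ l') :
    2 * (∑ l ∈ S, l.length) ≤ 3 * δ := by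
  classical
  set F : List (Fin n) → Finset (Fin n) :=
    fun l => (l.filter (fun x => x.val < δ)).toFinset with hF
  have hFc : ∀ l ∈ S, (F l).card = (l.filter (fun x => x.val < δ)).length := by
    intro l hl
    exact List.toFinset_card_of_nodup (((hcyc l hl).2.1).filter _)
  have hdF : ∀ l ∈ S, ∀ l' ∈ S, l ≠ l' → Disjoint (F l) (F l') := by
    intro l hl l' hl' hne
    rw [Finset.disjoint_left]
    intro x hx hx'
    have h1 : x ∈ l := (List.mem_filter.mp (List.mem_toFinset.mp hx)).1
    have h2 : x ∈ l' := (List.mem_filter.mp (List.mem_toFinset.mp hx')).1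
    exact hdisj l hl l' hl' hne x h1 h2
  have hsub : S.biUnion F ⊆ Finset.univ.filter (fun x : Fin n => x.val < δ) := by
    intro x hx
    obtain ⟨l, _, hxl⟩ := Finset.mem_biUnion.mp hx
    have := (List.mem_filter.mp (List.mem_toFinset.mp hxl)).2
    simp only [decide_eq_true_eq] at this
    exact Finset.mem_filter.mpr ⟨Finset.mem_univ x, this⟩
  calc 2 * (∑ l ∈ S, l.length) = ∑ l ∈ S, 2 * l.length := by rw [Finset.mul_sum]
    _ ≤ ∑ l ∈ S, 3 * (F l).card := by
        apply Finset.sum_le_sum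
        intro l hl
        rw [hFc l hl]
        exact cycle_bound (hcyc l hl)
    _ = 3 * ∑ l ∈ S, (F l).card := by rw [Finset.mul_sum]
    _ = 3 * (S.biUnion F).card := by rw [Finset.card_biUnion hdF]
    _ ≤ 3 * δ := by
        have := Finset.card_le_card hsub
        rw [Afin_card hn] at this
        omega

theorem stmt3 (n δ : ℕ) (hδ : 1 ≤ δ) (h : 3 * δ < 2 * n) :
    ∃ (V : Type) (inst : Fintype V) (G : SimpleGraph V) (c : V → V → ℕ),
      @Fintype.card V inst = n ∧
      G.Connected ∧
      (∀ u v, c u v = c v u) ∧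
      (∀ v : V, δ ≤ colourDeg G c v) ∧
      (∃ v : V, colourDeg G c v = δ) ∧
      (∀ S : Finset (List V),
        (∀ l ∈ S, IsPCCycle G c l) →
        (∀ l ∈ S, ∀ l' ∈ S, l ≠ l' → ∀ v, v ∈ l → v ∉ l') →
        2 * (∑ l ∈ S, l.length) ≤ 3 * δ) ∧
      (¬ ∃ S : Finset (List V),
        (∀ l ∈ S, IsPCCycle G c l) ∧
        (∀ l ∈ S, ∀ l' ∈ S, l ≠ l' → ∀ v, v ∈ l → v ∉ l') ∧
        (∀ v : V, ∃ l ∈ S, v ∈ l)) ∧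
      (¬ ∃ l : List V, IsPCCycle G c l ∧ l.length = n) := by
  classical
  have hn2 : δ + 1 ≤ n := by omega
  have hδn : δ ≤ n := by omega
  refine ⟨Fin n, inferInstance, Gr n δ, col δ, Fintype.card_fin n,
    Gr_connected hδ (by omega), col_symm δ, ?_, ?_, ?_, ?_, ?_⟩
  · intro v
    exact (colourDeg_eq hδ hn2 v).ge
  · exact ⟨⟨0, by omega⟩, colourDeg_eq hδ hn2 _⟩
  · intro S h1 h2
    exact sum_bound (by omega) S h1 h2
  · rintro ⟨S, h1, h2, h3⟩
    have hs := sum_bound (n := n) (by omega) S h1 h2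
    have hcover : (Finset.univ : Finset (Fin n)) ⊆ S.biUnion List.toFinset := by
      intro x _
      obtain ⟨l, hl, hxl⟩ := h3 x
      exact Finset.mem_biUnion.mpr ⟨l, hl, List.mem_toFinset.mpr hxl⟩
    have hn' : n ≤ ∑ l ∈ S, l.length := by
      calc n = (Finset.univ : Finset (Fin n)).card := by
              rw [Finset.card_univ, Fintype.card_fin]
        _ ≤ (S.biUnion List.toFinset).card := Finset.card_le_card hcover
        _ ≤ ∑ l ∈ S, l.toFinset.card := Finset.card_biUnion_le
        _ ≤ ∑ l ∈ S, l.length := Finset.sum_le_sum (fun l _ => List.toFinset_card_le l)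
    omega
  · rintro ⟨l, hc, hlen⟩
    have hd : ∀ l1 ∈ ({l} : Finset (List (Fin n))), ∀ l2 ∈ ({l} : Finset (List (Fin n))),
        l1 ≠ l2 → ∀ v, v ∈ l1 → v ∉ l2 := by
      intro l1 hl1 l2 hl2 hne
      simp only [Finset.mem_singleton] at hl1 hl2
      subst hl1; subst hl2
      exact absurd rfl hne
    have hs := sum_bound (n := n) hδn {l} (by simpa using hc) hd
    rw [Finset.sum_singleton, hlen] at hs
    omega
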